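/- For every A > 0, every λ ∈ ℂ ∖ (Σ_A ∪ {0}), and all real numbers u₀, u₁, m₀ (playing the roles of u, u_x, m), define V := [[λ^{−2} + (u₀² − u₁²)/2, −λ^{−1}(u₀ − u₁) − λ(u₀² − u₁²)m₀/2],[λ^{−1}(u₀ + u₁) + λ(u₀² − u₁²)m₀/2, −λ^{−2} − (u₀² − u₁²)/2]] and V̂_A := −(1/(2A·k_A(λ)))·(λ(u₀² − u₁²)(m₀ − A) + 2(u₀ − A)/λ)·σ₂ + (u₁/λ)·σ₁ − (1/(i·A·k_A(λ)))·(A(u₀ − A) + (1/(2A))(u₀² − u₁²)(m₀ − A))·σ₃. Then the matrix identity D_A(λ)·V·E_A(λ) = i·A·k_A(λ)·((u₀² − u₁²)m₀/(2A) + 1/λ²)·σ₃ + V̂_A holds. -/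

import Mathlib

open Complex Matrix MeasureTheory Filter

noncomputable def csqrt (z : ℂ) : ℂ := z ^ (1/2 : ℂ)

noncomputable def sB (w : ℂ) : ℂ := Complex.I * csqrt (-w)

def SigmaSet (A : ℝ) : Set ℂ := Complex.ofReal '' (Set.Iic (-(1/A)) ∪ Set.Ici (1/A))

noncomputable def kA (A : ℝ) (l : ℂ) : ℂ := Complex.I * csqrt (1/(A:ℂ)^2 - l^2)

noncomputable def DA (A : ℝ) (l : ℂ) : Matrix (Fin 2) (Fin 2) ℂ :=
  (((Real.sqrt 2 : ℝ) : ℂ)⁻¹ * sB (1/(Complex.I * (A:ℂ) * kA A l) - 1)) •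
    !![l * (A:ℂ) / (1 - Complex.I * (A:ℂ) * kA A l), -1;
       -1, l * (A:ℂ) / (1 - Complex.I * (A:ℂ) * kA A l)]

noncomputable def EA (A : ℝ) (l : ℂ) : Matrix (Fin 2) (Fin 2) ℂ :=
  (((Real.sqrt 2 : ℝ) : ℂ)⁻¹ * sB (1/(Complex.I * (A:ℂ) * kA A l) - 1)) •
    !![l * (A:ℂ) / (1 - Complex.I * (A:ℂ) * kA A l), 1;
       1, l * (A:ℂ) / (1 - Complex.I * (A:ℂ) * kA A l)]

def sigma1 : Matrix (Fin 2) (Fin 2) ℂ := !![0, 1; 1, 0]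
def sigma2 : Matrix (Fin 2) (Fin 2) ℂ := !![0, -Complex.I; Complex.I, 0]
def sigma3 : Matrix (Fin 2) (Fin 2) ℂ := !![1, 0; 0, -1]

lemma csqrt_sq (z : ℂ) : csqrt z ^ 2 = z := by
  unfold csqrt
  have h := Complex.cpow_nat_inv_pow z (two_ne_zero)
  norm_num at h
  convert h using 2

lemma csqrt_ne_zero {z : ℂ} (hz : z ≠ 0) : csqrt z ≠ 0 := by
  unfold csqrt
  simp [Complex.cpow_eq_zero_iff, hz]

set_option maxHeartbeats 2000000 in
/-- conjugating the matrix V of the Lax pair by D_A gives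
i·A·k_A(λ)·((u₀²−u₁²)m₀/(2A) + 1/λ²)·σ₃ + V̂_A. -/
theorem stmt_3 (A : ℝ) (hA : 0 < A) (l : ℂ) (hl : l ∉ SigmaSet A) (hl0 : l ≠ 0)
    (u0 u1 m0 : ℝ)
    (V : Matrix (Fin 2) (Fin 2) ℂ)
    (hV : V = !![1/l^2 + ((u0:ℂ)^2 - (u1:ℂ)^2)/2,
                 -(1/l) * ((u0:ℂ) - (u1:ℂ)) - l * ((u0:ℂ)^2 - (u1:ℂ)^2) * (m0:ℂ)/2;
                 (1/l) * ((u0:ℂ) + (u1:ℂ)) + l * ((u0:ℂ)^2 - (u1:ℂ)^2) * (m0:ℂ)/2,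
                 -(1/l^2) - ((u0:ℂ)^2 - (u1:ℂ)^2)/2])
    (Vhat : Matrix (Fin 2) (Fin 2) ℂ)
    (hVhat : Vhat =
      (-(1/(2 * (A:ℂ) * kA A l)) * (l * ((u0:ℂ)^2 - (u1:ℂ)^2) * ((m0:ℂ) - (A:ℂ))
          + 2 * ((u0:ℂ) - (A:ℂ))/l)) • sigma2
      + ((u1:ℂ)/l) • sigma1
      + (-(1/(Complex.I * (A:ℂ) * kA A l)) * ((A:ℂ) * ((u0:ℂ) - (A:ℂ))
          + (1/(2*(A:ℂ))) * ((u0:ℂ)^2 - (u1:ℂ)^2) * ((m0:ℂ) - (A:ℂ)))) • sigma3) :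
    DA A l * V * EA A l
      = (Complex.I * (A:ℂ) * kA A l *
          (((u0:ℂ)^2 - (u1:ℂ)^2) * (m0:ℂ)/(2*(A:ℂ)) + 1/l^2)) • sigma3 + Vhat := by
  have hA0 : (A:ℂ) ≠ 0 := by
    exact_mod_cast hA.ne'
  have hz : (1/(A:ℂ)^2 - l^2) ≠ 0 := by
    intro h
    have h2 : (l - ((1/A : ℝ):ℂ)) * (l + ((1/A : ℝ):ℂ)) = 0 := by
      push_cast
      linear_combination -h
    rcases mul_eq_zero.mp h2 with h3 | h3
    · exact hl ⟨1/A, Or.inr (Set.mem_Ici.mpr le_rfl), (sub_eq_zero.mp h3).symm⟩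
    · refine hl ⟨-(1/A), Or.inl (Set.mem_Iic.mpr le_rfl), ?_⟩
      push_cast at h3 ⊢
      linear_combination -h3
  have hk0 : kA A l ≠ 0 := by
    unfold kA
    exact mul_ne_zero Complex.I_ne_zero (csqrt_ne_zero hz)
  have hkk : kA A l ^ 2 = l^2 - 1/(A:ℂ)^2 := by
    unfold kA
    rw [mul_pow, Complex.I_sq, csqrt_sq]
    ring
  set k := kA A l with hkdef
  set c := Complex.I * (A:ℂ) * k with hcdef
  have hc0 : c ≠ 0 := mul_ne_zero (mul_ne_zero Complex.I_ne_zero hA0) hk0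
  have hc2 : c^2 = 1 - (A:ℂ)^2 * l^2 := by
    rw [hcdef, mul_pow, mul_pow, Complex.I_sq, hkk]
    field_simp
    ring
  have hc1 : (1:ℂ) - c ≠ 0 := by
    intro h
    have hc : c = 1 := by linear_combination -h
    rw [hc] at hc2
    have : (A:ℂ)^2 * l^2 = 0 := by linear_combination hc2
    rcases mul_eq_zero.mp this with h' | h'
    · exact hA0 (pow_eq_zero_iff two_ne_zero |>.mp h')
    · exact hl0 (pow_eq_zero_iff two_ne_zero |>.mp h')
  have hw0 : -(1/c - 1) ≠ 0 := by
    field_simp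
    intro h
    exact hc1 (by rw [neg_eq_zero, div_eq_zero_iff] at h; exact h.resolve_right hc0)
  have hs2 : sB (1/c - 1) ^ 2 = 1/c - 1 := by
    unfold sB
    rw [mul_pow, Complex.I_sq, csqrt_sq]
    ring
  have hr2 : (((Real.sqrt 2 : ℝ) : ℂ))^2 = 2 := by
    norm_cast
    rw [Real.sq_sqrt]; norm_num
  have hr0 : (((Real.sqrt 2 : ℝ) : ℂ)) ≠ 0 := by
    intro h
    rw [h] at hr2; norm_num at hr2
  have hf2 : (((Real.sqrt 2 : ℝ) : ℂ)⁻¹ * sB (1/c - 1))^2 = (1 - c)/(2*c) := by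
    rw [mul_pow, hs2]
    rw [inv_pow, hr2]
    field_simp
  clear_value k c
  subst hV hVhat
  rw [DA, EA, ← hkdef, ← hcdef]
  simp only [smul_mul_assoc, mul_smul_comm, smul_smul]
  rw [show ((Real.sqrt 2 : ℝ) : ℂ)⁻¹ * sB (1/c - 1) * (((Real.sqrt 2 : ℝ) : ℂ)⁻¹ * sB (1/c - 1)) = (1 - c)/(2*c) from by rw [← hf2]; ring]
  rw [show (1:ℂ)/(2*(A:ℂ)*k) = Complex.I/(2*c) from by rw [hcdef]; field_simp]
  obtain ⟨a, ha⟩ : ∃ a : ℂ, a = l * (A:ℂ) / (1 - c) := ⟨_, rfl⟩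
  have ha2 : a * (1 - c) = l * A := by rw [ha]; field_simp
  rw [← ha]
  unfold sigma1 sigma2 sigma3
  have ha5 : a^2 * (1 - c) = 1 + c := by
    apply mul_right_cancel₀ hc1
    linear_combination (a*(1-c) + l*(A:ℂ)) * ha2 + hc2
  have hD1 : (2:ℂ) * c * (l ^ 2 * 2 * (2 * l) * (l * 2 * (2 * l ^ 2))) ≠ 0 := by
    rw [show (2:ℂ)*c*(l^2*2*(2*l)*(l*2*(2*l^2))) = 32*c*l^6 from by ring]
    exact mul_ne_zero (mul_ne_zero (by norm_num) hc0) (pow_ne_zero _ hl0)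
  have hD2 : (2:ℂ) * c * (2 * l ^ 2 * (l * 2) * (2 * l * (l ^ 2 * 2))) ≠ 0 := by
    rw [show (2:ℂ)*c*(2*l^2*(l*2)*(2*l*(l^2*2))) = 32*c*l^6 from by ring]
    exact mul_ne_zero (mul_ne_zero (by norm_num) hc0) (pow_ne_zero _ hl0)
  ext i j
  fin_cases i <;> fin_cases j <;>
    simp [Matrix.mul_apply, Fin.sum_univ_succ, Matrix.smul_apply, Matrix.add_apply] <;>
    field_simp [hc0, hl0, hA0]
  · linear_combination ((A:ℂ)*(2+(l^2*((u0:ℂ)^2-(u1:ℂ)^2))))*ha5 + ((A:ℂ)*l*(-2*(l^2*((u0:ℂ)^2-(u1:ℂ)^2))*(m0:ℂ) - 4*(u0:ℂ)))*ha2 - 2*((l^2*((u0:ℂ)^2-(u1:ℂ)^2))*(m0:ℂ)+2*(A:ℂ))*hc2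
  · linear_combination (2*(2+(l^2*((u0:ℂ)^2-(u1:ℂ)^2))))*ha2 + (l*(-2*((u0:ℂ)-(u1:ℂ)) - (l^2*((u0:ℂ)^2-(u1:ℂ)^2))*(m0:ℂ)))*ha5 - 2*l*((l^2*((u0:ℂ)^2-(u1:ℂ)^2))*((m0:ℂ)-(A:ℂ))+2*((u0:ℂ)-(A:ℂ)))*Complex.I_sq
  · linear_combination (-2*(2+(l^2*((u0:ℂ)^2-(u1:ℂ)^2))))*ha2 + (l*(2*((u0:ℂ)+(u1:ℂ)) + (l^2*((u0:ℂ)^2-(u1:ℂ)^2))*(m0:ℂ)))*ha5 + 2*l*((l^2*((u0:ℂ)^2-(u1:ℂ)^2))*((m0:ℂ)-(A:ℂ))+2*((u0:ℂ)-(A:ℂ)))*Complex.I_sq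
  · linear_combination ((A:ℂ)*(-2-(l^2*((u0:ℂ)^2-(u1:ℂ)^2))))*ha5 + ((A:ℂ)*l*(4*(u0:ℂ) + 2*(l^2*((u0:ℂ)^2-(u1:ℂ)^2))*(m0:ℂ)))*ha2 + 2*((l^2*((u0:ℂ)^2-(u1:ℂ)^2))*(m0:ℂ)+2*(A:ℂ))*hc2
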